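/- Let h, L > 0. Suppose φ : [0,d] → ℝ is a twice continuously differentiable function satisfying φ'' = −(h²/2)·sin(2φ) on [0,d), φ(d) = 0, with 0 < φ(x) < π/2 for all x in [0, d), and boundary condition φ'(0) = −(L/2)·sin(2φ(0)). Then φ' < 0 on all of [0,d], i.e. φ is strictly decreasing on [0,d]. -/

import Mathlib

open Real

theorem stmt6 (h L d : ℝ) (hh : 0 < h) (hL : 0 < L) (hd : 0 < d)
    (φ : ℝ → ℝ) (hreg : ContDiff ℝ 2 φ)
    (heq : ∀ x ∈ Set.Ico (0 : ℝ) d,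
      deriv (deriv φ) x = -(h ^ 2 / 2) * Real.sin (2 * φ x))
    (htop : φ d = 0)
    (hpos : ∀ x ∈ Set.Ico (0 : ℝ) d, 0 < φ x ∧ φ x < Real.pi / 2)
    (hbot : deriv φ 0 = -(L / 2) * Real.sin (2 * φ 0)) :
    (∀ x ∈ Set.Icc (0 : ℝ) d, deriv φ x < 0) ∧ StrictAntiOn φ (Set.Icc 0 d) := by
  have hφdiff : Differentiable ℝ φ := hreg.differentiable (by norm_num)
  have hψC : ContDiff ℝ 1 (deriv φ) := by
    have : ContDiff ℝ ((1 : WithTop ℕ∞) + 1) φ := by exact_mod_cast hreg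
    exact (contDiff_succ_iff_deriv.mp this).2.2
  have hψdiff : Differentiable ℝ (deriv φ) := hψC.differentiable (by norm_num)
  have hψcont : Continuous (deriv φ) := hψdiff.continuous
  -- deriv φ 0 < 0
  have hsin0 : 0 < Real.sin (2 * φ 0) := by
    obtain ⟨h1, h2⟩ := hpos 0 ⟨le_refl 0, hd⟩
    apply Real.sin_pos_of_pos_of_lt_pi <;> nlinarith [Real.pi_pos]
  have hψ0 : deriv φ 0 < 0 := by
    rw [hbot]; nlinarith
  -- energy
  set E : ℝ → ℝ := fun x => (deriv φ x) ^ 2 - (h ^ 2 / 2) * Real.cos (2 * φ x) with hEdef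
  have hEconst : ∀ x ∈ Set.Icc (0 : ℝ) d, E x = E 0 := by
    apply constant_of_has_deriv_right_zero
    · exact ((hψcont.pow 2).sub (continuous_const.mul
        (Real.continuous_cos.comp (continuous_const.mul hφdiff.continuous)))).continuousOn
    · intro x hx
      have h1 : HasDerivAt φ (deriv φ x) x := (hφdiff x).hasDerivAt
      have h2 : HasDerivAt (deriv φ) (deriv (deriv φ) x) x := (hψdiff x).hasDerivAt
      have h3 : HasDerivAt (fun y => (deriv φ y) ^ 2)
          (2 * deriv φ x ^ 1 * deriv (deriv φ) x) x := by
        simpa using h2.fun_pow 2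
      have h4 : HasDerivAt (fun y => Real.cos (2 * φ y))
          (-Real.sin (2 * φ x) * (2 * deriv φ x)) x := (h1.const_mul 2).cos
      have h5 := h3.sub (h4.const_mul (h ^ 2 / 2))
      have h6 : 2 * deriv φ x ^ 1 * deriv (deriv φ) x -
          h ^ 2 / 2 * (-Real.sin (2 * φ x) * (2 * deriv φ x)) = 0 := by
        rw [heq x hx]; ring
      rw [h6] at h5
      exact h5.hasDerivWithinAt
  -- main claim: deriv φ < 0 on [0, d]
  have main : ∀ x ∈ Set.Icc (0 : ℝ) d, deriv φ x < 0 := by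
    by_contra hcon
    push_neg at hcon
    obtain ⟨z, hz, hzpos⟩ := hcon
    set S : Set ℝ := {x | x ∈ Set.Icc (0 : ℝ) d ∧ 0 ≤ deriv φ x} with hSdef
    have hSne : S.Nonempty := ⟨z, hz, hzpos⟩
    have hSclosed : IsClosed S :=
      isClosed_Icc.inter (isClosed_le continuous_const hψcont)
    have hSbdd : BddBelow S := ⟨0, fun x hx => hx.1.1⟩
    set x₀ : ℝ := sInf S with hx0def
    have hx0mem : x₀ ∈ S := hSclosed.csInf_mem hSne hSbdd
    obtain ⟨⟨hx00, hx0d⟩, hx0ge⟩ := hx0mem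
    have hbefore : ∀ x, 0 ≤ x → x < x₀ → deriv φ x < 0 := by
      intro x hx0 hxlt
      by_contra hge
      push_neg at hge
      have : x₀ ≤ x := csInf_le hSbdd ⟨⟨hx0, le_trans (le_of_lt hxlt) hx0d⟩, hge⟩
      linarith
    have hx0pos : 0 < x₀ := by
      rcases lt_or_eq_of_le hx00 with h' | h'
      · exact h'
      · exact absurd hx0ge (by rw [← h']; exact not_le.mpr hψ0)
    -- deriv φ x₀ = 0
    have hψx0le : deriv φ x₀ ≤ 0 := by
      have htend : Filter.Tendsto (deriv φ) (nhdsWithin x₀ (Set.Iio x₀)) (nhds (deriv φ x₀)) :=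
        (hψcont.tendsto x₀).mono_left nhdsWithin_le_nhds
      refine le_of_tendsto htend ?_
      filter_upwards [Ioo_mem_nhdsLT_of_mem (⟨hx0pos, le_refl x₀⟩ : x₀ ∈ Set.Ioc 0 x₀)]
        with y hy
      exact le_of_lt (hbefore y (le_of_lt hy.1) hy.2)
    have hψx0 : deriv φ x₀ = 0 := le_antisymm hψx0le hx0ge
    rcases lt_or_eq_of_le hx0d with hx0lt | hx0eq
    · -- interior case: deriv (deriv φ) x₀ < 0 but slope argument gives ≥ 0
      have hneg : deriv (deriv φ) x₀ < 0 := by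
        rw [heq x₀ ⟨hx00, hx0lt⟩]
        obtain ⟨h1, h2⟩ := hpos x₀ ⟨hx00, hx0lt⟩
        have : 0 < Real.sin (2 * φ x₀) :=
          Real.sin_pos_of_pos_of_lt_pi (by linarith) (by nlinarith [Real.pi_pos])
        nlinarith [mul_pos (by positivity : (0:ℝ) < h ^ 2 / 2) this]
      have hslope : Filter.Tendsto (slope (deriv φ) x₀) (nhdsWithin x₀ {x₀}ᶜ)
          (nhds (deriv (deriv φ) x₀)) :=
        hasDerivAt_iff_tendsto_slope.mp (hψdiff x₀).hasDerivAt
      have hslope' : Filter.Tendsto (slope (deriv φ) x₀) (nhdsWithin x₀ (Set.Iio x₀))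
          (nhds (deriv (deriv φ) x₀)) :=
        hslope.mono_left (nhdsWithin_mono x₀ (fun y hy => ne_of_lt hy))
      have hge0 : 0 ≤ deriv (deriv φ) x₀ := by
        refine ge_of_tendsto hslope' ?_
        filter_upwards [Ioo_mem_nhdsLT_of_mem (⟨hx0pos, le_refl x₀⟩ : x₀ ∈ Set.Ioc 0 x₀)]
          with y hy
        have h1 : deriv φ y < 0 := hbefore y (le_of_lt hy.1) hy.2
        have h2 : y - x₀ < 0 := by linarith [hy.2]
        rw [slope_def_field, hψx0, sub_zero]
        have : 0 < deriv φ y / (y - x₀) := div_pos_of_neg_of_neg h1 h2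
        linarith
      linarith
    · -- x₀ = d : energy contradiction
      have hEd : E d = E 0 := hEconst d ⟨le_of_lt hd, le_refl d⟩
      have h1 : E d = -(h ^ 2 / 2) := by
        simp only [hEdef]
        rw [← hx0eq, hψx0, hx0eq, htop]
        norm_num
      have hcos0 : Real.cos (2 * φ 0) ≤ 1 := Real.cos_le_one _
      have h2 : E 0 > -(h ^ 2 / 2) := by
        simp only [hEdef]
        nlinarith
      rw [hEd] at h1
      linarith
  refine ⟨main, strictAntiOn_of_deriv_neg (convex_Icc 0 d) hφdiff.continuous.continuousOn ?_⟩
  intro x hx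
  rw [interior_Icc] at hx
  exact main x ⟨le_of_lt hx.1, le_of_lt hx.2⟩
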